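/- Let ν, ζ ∈ ℝ, σ > 0, T > 0, and let h : ℝ → ℝ be continuous. Suppose W₁, W₂ : (0,∞) × [0,T] → ℝ are continuous, are differentiable in t and twice differentiable in x on (0,∞) × (0,T), both satisfy the risk-subjective PDE ∂W/∂t + (1/2)σ²x² ∂²W/∂x² + (ν − ζ)x ∂W/∂x = νW there, satisfy the same terminal condition W₁(x,T) = W₂(x,T) = h(x) for all x > 0, and obey the growth bound |Wᵢ(x,t)| ≤ C(1 + x^k + x^{−k}) for some C > 0, k ∈ ℕ and all (x,t) ∈ (0,∞) × [0,T]. Then W₁ = W₂ on (0,∞) × [0,T]. -/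

import Mathlib

open Real MeasureTheory Set

section AuxLemmas

open Filter Topology

private lemma deriv_nonpos_of_isMaxOn_Ioc' {f : ℝ → ℝ} {a b f' : ℝ} (hab : a < b)
    (hf : HasDerivAt f f' a) (h : ∀ s ∈ Set.Ioc a b, f s ≤ f a) : f' ≤ 0 := by
  have hslope := hasDerivAt_iff_tendsto_slope.mp hf
  have h2 : Tendsto (slope f a) (𝓝[>] a) (𝓝 f') :=
    hslope.mono_left (nhdsWithin_mono _ (fun y hy => ne_of_gt hy))
  refine le_of_tendsto h2 ?_
  filter_upwards [Ioo_mem_nhdsGT_of_mem (left_mem_Ico.2 hab)] with y hy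
  have h3 : f y ≤ f a := h y ⟨hy.1, hy.2.le⟩
  rw [slope_def_field]
  apply div_nonpos_of_nonpos_of_nonneg <;> [linarith; linarith [hy.1]]

private lemma second_deriv_nonpos_of_isLocalMax' {f : ℝ → ℝ} {x₀ f'' : ℝ} (hx₀ : 0 < x₀)
    (hdiff : ∀ y ∈ Set.Ioi (0:ℝ), DifferentiableAt ℝ f y)
    (h2 : HasDerivAt (deriv f) f'' x₀)
    (hmax : IsLocalMax f x₀) : f'' ≤ 0 := by
  by_contra hpos
  push_neg at hpos
  have hd0 : deriv f x₀ = 0 := hmax.deriv_eq_zero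
  have hslope := hasDerivAt_iff_tendsto_slope.mp h2
  have h3 : ∀ᶠ y in 𝓝[>] x₀, 0 < slope (deriv f) x₀ y := by
    have ht := hslope.mono_left (nhdsWithin_mono _ (fun y (hy : y ∈ Ioi x₀) => ne_of_gt hy))
    exact ht.eventually (eventually_gt_nhds hpos)
  have h4 : ∀ᶠ y in 𝓝[>] x₀, 0 < deriv f y ∧ f y ≤ f x₀ := by
    have h5 : ∀ᶠ y in 𝓝[>] x₀, f y ≤ f x₀ := hmax.filter_mono nhdsWithin_le_nhds
    filter_upwards [h3, h5, self_mem_nhdsWithin] with y hy hy5 (hy' : y ∈ Ioi x₀)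
    have hyx : (0:ℝ) < y - x₀ := sub_pos.2 hy'
    rw [slope_def_field, hd0, sub_zero] at hy
    have := mul_pos hy hyx
    rw [div_mul_cancel₀ _ (ne_of_gt hyx)] at this
    exact ⟨this, hy5⟩
  obtain ⟨c, hc, hsub⟩ := mem_nhdsGT_iff_exists_Ioo_subset.mp h4
  set d := (x₀ + c)/2 with hd
  have hx₀d : x₀ < d := by simp only [hd]; simp only [mem_Ioi] at hc; linarith
  have hdc : d < c := by simp only [hd]; simp only [mem_Ioi] at hc; linarith
  have hmono : StrictMonoOn f (Icc x₀ d) := by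
    apply strictMonoOn_of_deriv_pos (convex_Icc _ _)
    · intro y hy
      exact (hdiff y (lt_of_lt_of_le hx₀ hy.1)).continuousAt.continuousWithinAt
    · intro y hy
      rw [interior_Icc] at hy
      exact (hsub ⟨hy.1, lt_trans hy.2 hdc⟩).1
  have h6 : f x₀ < f d := hmono (left_mem_Icc.2 hx₀d.le) (right_mem_Icc.2 hx₀d.le) hx₀d
  have h7 : f d ≤ f x₀ := (hsub ⟨hx₀d, hdc⟩).2
  linarith

end AuxLemmas

/-- `W` solves the risk-subjective PDE
`∂W/∂t + (1/2)σ²x² ∂²W/∂x² + (ν − ζ)x ∂W/∂x = νW` on `(0,∞) × (0,T)`,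
being differentiable in `t` and twice differentiable in `x` there. -/
def SolvesRiskSubjPDE (ν ζ σ T : ℝ) (W : ℝ → ℝ → ℝ) : Prop :=
  ∀ x t : ℝ, 0 < x → 0 < t → t < T →
    ∃ Wt Wx Wxx : ℝ,
      HasDerivAt (fun s : ℝ => W x s) Wt t ∧
      HasDerivAt (fun y : ℝ => W y t) Wx x ∧
      HasDerivAt (deriv fun y : ℝ => W y t) Wxx x ∧
      Wt + (1 / 2) * σ ^ 2 * x ^ 2 * Wxx + (ν - ζ) * x * Wx = ν * W x t

private lemma SolvesRiskSubjPDE.sub' {ν ζ σ T : ℝ} {W₁ W₂ : ℝ → ℝ → ℝ}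
    (h₁ : SolvesRiskSubjPDE ν ζ σ T W₁) (h₂ : SolvesRiskSubjPDE ν ζ σ T W₂) :
    SolvesRiskSubjPDE ν ζ σ T (fun x t => W₁ x t - W₂ x t) := by
  intro x t hx ht htT
  obtain ⟨At, Ax, Axx, h1t, h1x, h1xx, h1e⟩ := h₁ x t hx ht htT
  obtain ⟨Bt, Bx, Bxx, h2t, h2x, h2xx, h2e⟩ := h₂ x t hx ht htT
  refine ⟨At - Bt, Ax - Bx, Axx - Bxx, h1t.sub h2t, h1x.sub h2x, ?_, by linarith⟩
  have heq : (deriv fun y : ℝ => W₁ y t - W₂ y t) =ᶠ[nhds x]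
      fun y => (deriv fun z : ℝ => W₁ z t) y - (deriv fun z : ℝ => W₂ z t) y := by
    filter_upwards [Ioi_mem_nhds hx] with y hy
    obtain ⟨_, Ax', _, _, h1x', _, _⟩ := h₁ y t hy ht htT
    obtain ⟨_, Bx', _, _, h2x', _, _⟩ := h₂ y t hy ht htT
    exact deriv_sub h1x'.differentiableAt h2x'.differentiableAt
  exact (h1xx.sub h2xx).congr_of_eventuallyEq heq

set_option maxHeartbeats 1000000 in
private lemma risk_subj_key (ν ζ σ T : ℝ) (hσ : 0 < σ) (hT : 0 < T) (u : ℝ → ℝ → ℝ)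
    (hucont : ContinuousOn (fun p : ℝ × ℝ => u p.1 p.2) (Ioi 0 ×ˢ Icc 0 T))
    (hpde : SolvesRiskSubjPDE ν ζ σ T u)
    (hterm : ∀ x : ℝ, 0 < x → u x T = 0)
    (D : ℝ) (hD : 0 < D) (k : ℕ)
    (hgrowth : ∀ x t : ℝ, 0 < x → t ∈ Icc 0 T → |u x t| ≤ D * (1 + x ^ k + x⁻¹ ^ k)) :
    ∀ x t : ℝ, 0 < x → 0 < t → t ≤ T → u x t ≤ 0 := by
  intro x t hx ht htT
  rcases eq_or_lt_of_le htT with rfl | htT'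
  · exact le_of_eq (hterm x hx)
  set A : ℝ := (1/2) * σ^2 with hA
  have hApos : 0 < A := by positivity
  set B : ℝ := ν - ζ with hB
  set m : ℕ := k + 1 with hm
  have hmcast : (m:ℝ) = (k:ℝ) + 1 := by rw [hm]; push_cast; ring
  set L : ℝ := A * (m:ℝ) * ((m:ℝ)+1) + |B| * (m:ℝ) + 1 with hL
  have hLpos : 0 < L := by positivity
  set g : ℝ → ℝ := fun y => y^m + (y⁻¹)^m with hg
  have hgpos : ∀ y : ℝ, 0 < y → 0 < g y := fun y hy => by simp only [hg]; positivity
  have hE0 : (0:ℝ) < Real.exp (ν*(T - t)) := Real.exp_pos _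
  have hc0 : (0:ℝ) < Real.exp (L*(T - t)) * g x := mul_pos (Real.exp_pos _) (hgpos x hx)
  suffices hsuff : ∀ ε : ℝ, 0 < ε →
      Real.exp (ν*(T-t)) * u x t ≤ ε * (Real.exp (L*(T-t)) * g x) by
    by_contra hcon
    push_neg at hcon
    have h1 : 0 < Real.exp (ν*(T-t)) * u x t := mul_pos hE0 hcon
    set Aq := Real.exp (ν*(T-t)) * u x t with hAq
    set c := Real.exp (L*(T-t)) * g x with hcc
    have h2 := hsuff (Aq/(2*c)) (by positivity)
    have h3 : Aq/(2*c)*c = Aq/2 := by field_simp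
    rw [h3] at h2
    linarith
  intro ε hε
  set D' : ℝ := D * Real.exp (|ν| * T) with hD'
  have hD'pos : 0 < D' := by positivity
  set M : ℝ := max (max x x⁻¹) (max 1 (3*D'/ε)) with hM
  set R : ℝ := M + 1 with hRdef
  have hM1 : (1:ℝ) ≤ M := le_trans (le_max_left 1 _) (le_max_right _ _)
  have hR1 : 1 < R := by rw [hRdef]; linarith
  have hRpos : 0 < R := lt_trans one_pos hR1
  have hRipos : 0 < R⁻¹ := inv_pos.2 hRpos
  have hxR : x < R := by
    have : x ≤ M := le_trans (le_max_left _ _) (le_max_left _ _)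
    rw [hRdef]; linarith
  have hxiR : x⁻¹ < R := by
    have : x⁻¹ ≤ M := le_trans (le_max_right _ _) (le_max_left _ _)
    rw [hRdef]; linarith
  have hx_lowR : R⁻¹ < x := (inv_lt_comm₀ hRpos hx).mpr hxiR
  have hRD : 3*D' < ε*R := by
    have h1 : 3*D'/ε ≤ M := le_trans (le_max_right _ _) (le_max_right _ _)
    rw [div_le_iff₀ hε] at h1
    have h2 : ε*M < ε*R := by
      have hMR : M < R := by rw [hRdef]; linarith
      exact mul_lt_mul_of_pos_left hMR hε
    nlinarith
  set K : Set (ℝ×ℝ) := Icc R⁻¹ R ×ˢ Icc t T with hK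
  have hKsub : K ⊆ Ioi 0 ×ˢ Icc 0 T := by
    rintro ⟨y, s⟩ ⟨hy, hs⟩
    exact ⟨lt_of_lt_of_le hRipos hy.1, ⟨le_trans ht.le hs.1, hs.2⟩⟩
  set v : ℝ×ℝ → ℝ :=
    fun p => Real.exp (ν*(T - p.2)) * u p.1 p.2 - ε * (Real.exp (L*(T - p.2)) * g p.1) with hv
  have hvcont : ContinuousOn v K := by
    apply ContinuousOn.sub
    · exact ((Real.continuous_exp.comp (continuous_const.mul
        (continuous_const.sub continuous_snd))).continuousOn).mul (hucont.mono hKsub)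
    · apply continuousOn_const.mul
      apply ContinuousOn.mul
      · exact (Real.continuous_exp.comp (continuous_const.mul
          (continuous_const.sub continuous_snd))).continuousOn
      · have hne : ∀ p ∈ K, (p:ℝ×ℝ).1 ≠ 0 := by
          rintro ⟨y, s⟩ hp
          exact ne_of_gt (lt_of_lt_of_le hRipos hp.1.1)
        simp only [hg]
        exact ((continuous_fst.continuousOn.pow m).add
          ((continuous_fst.continuousOn.inv₀ hne).pow m))
  have hKcomp : IsCompact K := (isCompact_Icc).prod isCompact_Icc
  have hKne : (x, t) ∈ K := ⟨⟨hx_lowR.le, hxR.le⟩, ⟨le_refl t, htT⟩⟩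
  obtain ⟨⟨x₀, t₀⟩, hp₀, hmax⟩ := hKcomp.exists_isMaxOn ⟨_, hKne⟩ hvcont
  by_cases hvp : v (x₀, t₀) ≤ 0
  · have hxt : v (x, t) ≤ 0 := le_trans (hmax hKne) hvp
    simp only [hv] at hxt
    linarith
  push_neg at hvp
  exfalso
  obtain ⟨⟨hx₀l, hx₀r⟩, ht₀l, ht₀r⟩ := hp₀
  replace hx₀l : R⁻¹ ≤ x₀ := hx₀l
  replace hx₀r : x₀ ≤ R := hx₀r
  replace ht₀l : t ≤ t₀ := ht₀l
  replace ht₀r : t₀ ≤ T := ht₀r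
  have hx₀pos : 0 < x₀ := lt_of_lt_of_le hRipos hx₀l
  have hx₀ne : x₀ ≠ 0 := ne_of_gt hx₀pos
  have ht₀pos : 0 < t₀ := lt_of_lt_of_le ht ht₀l
  -- boundary estimate on the lateral sides
  have hbound : ∀ y s : ℝ, y ∈ Icc R⁻¹ R → s ∈ Icc t T → R^m ≤ g y → v (y, s) ≤ 0 := by
    intro y s hy hs hgy
    have hypos : 0 < y := lt_of_lt_of_le hRipos hy.1
    have hsmem : s ∈ Icc (0:ℝ) T := ⟨le_trans ht.le hs.1, hs.2⟩
    have hu := hgrowth y s hypos hsmem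
    have he1 : Real.exp (ν*(T-s)) ≤ Real.exp (|ν| * T) := by
      apply Real.exp_le_exp.mpr
      have h1 : ν*(T-s) ≤ |ν| * (T-s) :=
        mul_le_mul_of_nonneg_right (le_abs_self ν) (by linarith [hs.2])
      have h2 : |ν| * (T-s) ≤ |ν| * T :=
        mul_le_mul_of_nonneg_left (by linarith [hs.1, ht.le]) (abs_nonneg ν)
      linarith
    have hterm1 : Real.exp (ν*(T-s)) * u y s ≤ D' * (1 + y^k + y⁻¹^k) := by
      have h1 : Real.exp (ν*(T-s)) * u y s ≤ Real.exp (ν*(T-s)) * |u y s| :=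
        mul_le_mul_of_nonneg_left (le_abs_self _) (Real.exp_pos _).le
      have h2 : Real.exp (ν*(T-s)) * |u y s| ≤ Real.exp (|ν| * T) * (D * (1 + y^k + y⁻¹^k)) :=
        mul_le_mul he1 hu (abs_nonneg _) (Real.exp_pos _).le
      rw [hD']
      linarith
    have hgk : 1 + y^k + y⁻¹^k ≤ 3*R^k := by
      have h1 : y^k ≤ R^k := pow_le_pow_left₀ hypos.le hy.2 k
      have h2 : y⁻¹ ≤ R := (inv_le_comm₀ hypos hRpos).mpr hy.1
      have h3 : y⁻¹^k ≤ R^k := pow_le_pow_left₀ (inv_pos.2 hypos).le h2 k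
      have h4 : (1:ℝ) ≤ R^k := one_le_pow₀ hR1.le
      linarith
    have hexp1 : (1:ℝ) ≤ Real.exp (L*(T-s)) := by
      apply Real.one_le_exp
      have h5 : 0 ≤ T - s := by linarith [hs.2]
      positivity
    have hgy0 : 0 < g y := hgpos y hypos
    have hterm2 : ε * R^m ≤ ε * (Real.exp (L*(T-s)) * g y) := by
      apply mul_le_mul_of_nonneg_left _ hε.le
      nlinarith
    have hRm : R^m = R * R^k := by rw [hm, pow_succ]; ring
    have hRk : (0:ℝ) < R^k := pow_pos hRpos k
    have h10 : D' * (1 + y^k + y⁻¹^k) ≤ D' * (3*R^k) :=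
      mul_le_mul_of_nonneg_left hgk hD'pos.le
    have h11 : (3*D') * R^k ≤ (ε*R) * R^k :=
      mul_le_mul_of_nonneg_right hRD.le hRk.le
    simp only [hv]
    have hRmEq : ε * R^m = ε*R*R^k := by rw [hRm]; ring
    linarith
  -- t₀ < T
  have ht₀T : t₀ < T := by
    rcases eq_or_lt_of_le ht₀r with hteq | hlt
    · exfalso
      rw [hteq] at hvp
      simp only [hv, sub_self, mul_zero, Real.exp_zero, one_mul,
        hterm x₀ hx₀pos] at hvp
      linarith [mul_pos hε (hgpos x₀ hx₀pos)]
    · exact hlt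
  -- x₀ strictly inside
  have hx₀lS : R⁻¹ < x₀ := by
    rcases eq_or_lt_of_le hx₀l with hxeq | hlt
    · exfalso
      have hgy : R^m ≤ g x₀ := by
        rw [← hxeq]
        simp only [hg, inv_inv]
        nlinarith [pow_pos hRipos m]
      exact absurd (hbound x₀ t₀ ⟨hx₀l, hx₀r⟩ ⟨ht₀l, ht₀r⟩ hgy) (not_le.2 hvp)
    · exact hlt
  have hx₀rS : x₀ < R := by
    rcases eq_or_lt_of_le hx₀r with hxeq | hlt
    · exfalso
      have hgy : R^m ≤ g x₀ := by
        rw [hxeq]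
        simp only [hg]
        nlinarith [pow_pos hRipos m]
      exact absurd (hbound x₀ t₀ ⟨hx₀l, hx₀r⟩ ⟨ht₀l, ht₀r⟩ hgy) (not_le.2 hvp)
    · exact hlt
  obtain ⟨Ut, Ux, Uxx, hUt, hUx, hUxx, hUe⟩ := hpde x₀ t₀ hx₀pos ht₀pos ht₀T
  set E := Real.exp (ν*(T - t₀)) with hE
  set EL := Real.exp (L*(T - t₀)) with hEL
  have hEpos : 0 < E := Real.exp_pos _
  have hELpos : 0 < EL := Real.exp_pos _
  -- time derivative and its sign
  have hft : HasDerivAt (fun s => v (x₀, s)) (E*Ut - ν*E*u x₀ t₀ + ε*L*EL*g x₀) t₀ := by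
    have e1 : HasDerivAt (fun s:ℝ => ν*(T - s)) (-ν) t₀ := by
      simpa using ((hasDerivAt_id t₀).const_sub T).const_mul ν
    have e3 := e1.exp.mul hUt
    have e4 : HasDerivAt (fun s:ℝ => L*(T - s)) (-L) t₀ := by
      simpa using ((hasDerivAt_id t₀).const_sub T).const_mul L
    have e5 := (e4.exp.mul_const (g x₀)).const_mul ε
    have e6 := e3.sub e5
    simp only [hv]
    refine e6.congr_deriv ?_
    rw [hE, hEL]
    ring
  have hvt_le : E*Ut - ν*E*u x₀ t₀ + ε*L*EL*g x₀ ≤ 0 := by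
    apply deriv_nonpos_of_isMaxOn_Ioc' ht₀T hft
    intro s hs
    exact hmax ⟨⟨hx₀l, hx₀r⟩, ⟨le_trans ht₀l hs.1.le, hs.2⟩⟩
  -- spatial derivatives
  set Gd : ℝ → ℝ := fun y => (m:ℝ)*y^k - (m:ℝ)*(y⁻¹)^(k+2) with hGd
  have hgd : ∀ y : ℝ, y ≠ 0 → HasDerivAt g (Gd y) y := by
    intro y hy
    have h1 := hasDerivAt_pow m y
    have h2 := (hasDerivAt_inv hy).pow m
    have h3 := h1.add h2
    simp only [hg, hGd]
    refine h3.congr_deriv ?_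
    have hk1 : m - 1 = k := by omega
    rw [hk1, ← inv_pow]
    ring
  set gdd : ℝ := (m:ℝ)*((k:ℝ)*x₀^(k-1)) + (m:ℝ)*((k:ℝ)+2)*(x₀⁻¹)^(k+3) with hgdd_def
  have hgdd : HasDerivAt Gd gdd x₀ := by
    have h1 := (hasDerivAt_pow k x₀).const_mul (m:ℝ)
    have h2 := ((hasDerivAt_inv hx₀ne).pow (k+2)).const_mul (m:ℝ)
    have h3 := h1.sub h2
    simp only [hGd, hgdd_def]
    refine h3.congr_deriv ?_
    have hk2 : k + 2 - 1 = k + 1 := by omega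
    rw [hk2, ← inv_pow]
    push_cast
    ring
  set F : ℝ → ℝ := fun y => E * u y t₀ - ε * (EL * g y) with hF
  have hFv : ∀ y : ℝ, F y = v (y, t₀) := by
    intro y; simp only [hF, hv, hE, hEL]
  have hlocmax : IsLocalMax F x₀ := by
    have hIcc : Icc R⁻¹ R ∈ nhds x₀ := Icc_mem_nhds hx₀lS hx₀rS
    have : ∀ᶠ y in nhds x₀, F y ≤ F x₀ := by
      filter_upwards [hIcc] with y hy
      rw [hFv y, hFv x₀]
      exact hmax ⟨hy, ⟨ht₀l, ht₀r⟩⟩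
    exact this
  have hfx : HasDerivAt F (E*Ux - ε*(EL*Gd x₀)) x₀ := by
    have h := (hUx.const_mul E).sub (((hgd x₀ hx₀ne).const_mul EL).const_mul ε)
    exact h
  have hvx0 : E*Ux - ε*(EL*Gd x₀) = 0 := hlocmax.hasDerivAt_eq_zero hfx
  have hdiffF : ∀ y ∈ Ioi (0:ℝ), DifferentiableAt ℝ F y := by
    intro y hy
    obtain ⟨_, Ux', _, _, hUx', _, _⟩ := hpde y t₀ hy ht₀pos ht₀T
    have h := ((hUx'.const_mul E).sub
      (((hgd y (ne_of_gt hy)).const_mul EL).const_mul ε)).differentiableAt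
    exact h
  have hderivF : deriv F =ᶠ[nhds x₀]
      fun y => E * (deriv fun z : ℝ => u z t₀) y - ε * (EL * Gd y) := by
    filter_upwards [Ioi_mem_nhds hx₀pos] with y hy
    obtain ⟨_, Ux', _, _, hUx', _, _⟩ := hpde y t₀ hy ht₀pos ht₀T
    have d1 : DifferentiableAt ℝ (fun z : ℝ => u z t₀) y := hUx'.differentiableAt
    have d2 : DifferentiableAt ℝ g y := (hgd y (ne_of_gt hy)).differentiableAt
    simp only [hF]
    rw [deriv_fun_sub (d1.const_mul E) ((d2.const_mul EL).const_mul ε),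
      deriv_const_mul E d1, deriv_const_mul ε (d2.const_mul EL),
      deriv_const_mul EL d2, (hgd y (ne_of_gt hy)).deriv]
  have hF2 : HasDerivAt (deriv F) (E*Uxx - ε*(EL*gdd)) x₀ := by
    have hbase : HasDerivAt (fun y => E * (deriv fun z : ℝ => u z t₀) y - ε * (EL * Gd y))
        (E*Uxx - ε*(EL*gdd)) x₀ :=
      (hUxx.const_mul E).sub ((hgdd.const_mul EL).const_mul ε)
    exact hbase.congr_of_eventuallyEq hderivF
  have hvxx_le : E*Uxx - ε*(EL*gdd) ≤ 0 :=
    second_deriv_nonpos_of_isLocalMax' hx₀pos hdiffF hF2 hlocmax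
  -- final arithmetic
  have hXP : (0:ℝ) < x₀^(k+1) := pow_pos hx₀pos (k+1)
  have hXN : (0:ℝ) < (x₀⁻¹)^(k+1) := pow_pos (inv_pos.2 hx₀pos) (k+1)
  have i1 : x₀^2 * ((k:ℝ)*x₀^(k-1)) = (k:ℝ)*x₀^(k+1) := by
    cases k with
    | zero => simp
    | succ i => push_cast; ring
  have i2 : x₀^2 * (x₀⁻¹)^(k+3) = (x₀⁻¹)^(k+1) := by
    have h1 : (x₀⁻¹)^(k+3) = (x₀⁻¹)^(k+1) * (x₀⁻¹)^2 := by
      rw [show k+3 = (k+1)+2 by omega, pow_add]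
    rw [h1]
    have hcan : x₀^2 * (x₀⁻¹)^2 = 1 := by
      rw [inv_pow]; exact mul_inv_cancel₀ (pow_ne_zero 2 hx₀ne)
    calc x₀^2 * ((x₀⁻¹)^(k+1) * (x₀⁻¹)^2)
        = (x₀^2 * (x₀⁻¹)^2) * (x₀⁻¹)^(k+1) := by ring
      _ = (x₀⁻¹)^(k+1) := by rw [hcan, one_mul]
  have i3 : x₀ * x₀^k = x₀^(k+1) := by rw [pow_succ]; ring
  have i4 : x₀ * (x₀⁻¹)^(k+2) = (x₀⁻¹)^(k+1) := by
    rw [show k+2 = (k+1)+1 by omega, pow_succ]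
    have hcan : x₀ * x₀⁻¹ = 1 := mul_inv_cancel₀ hx₀ne
    calc x₀ * ((x₀⁻¹)^(k+1) * x₀⁻¹) = (x₀ * x₀⁻¹) * (x₀⁻¹)^(k+1) := by ring
      _ = (x₀⁻¹)^(k+1) := by rw [hcan, one_mul]
  have hg₀ : g x₀ = x₀^(k+1) + (x₀⁻¹)^(k+1) := by rw [hg]
  have hPDE' : E*Ut + A*x₀^2*(E*Uxx) + B*x₀*(E*Ux) = ν*E*u x₀ t₀ := by
    rw [hA, hB]
    linear_combination E * hUe
  have hstep1 : ε*L*EL*g x₀ ≤ A*x₀^2*(E*Uxx) + B*x₀*(E*Ux) := by linarith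
  have hstep2 : A*x₀^2*(E*Uxx) ≤ A*x₀^2*(ε*(EL*gdd)) :=
    mul_le_mul_of_nonneg_left (by linarith) (by positivity)
  have hstep3 : B*x₀*(E*Ux) = B*x₀*(ε*(EL*Gd x₀)) := by
    rw [show E*Ux = ε*(EL*Gd x₀) by linarith]
  have hcomb : ε*L*EL*g x₀ ≤ ε*EL*(A*(x₀^2*gdd) + B*(x₀*Gd x₀)) := by
    calc ε*L*EL*g x₀ ≤ A*x₀^2*(E*Uxx) + B*x₀*(E*Ux) := hstep1
      _ ≤ A*x₀^2*(ε*(EL*gdd)) + B*x₀*(ε*(EL*Gd x₀)) := by linarith [hstep2, hstep3]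
      _ = ε*EL*(A*(x₀^2*gdd) + B*(x₀*Gd x₀)) := by ring
  have e1 : x₀^2*gdd = (m:ℝ)*((k:ℝ)*x₀^(k+1)) + (m:ℝ)*((k:ℝ)+2)*(x₀⁻¹)^(k+1) := by
    rw [hgdd_def]
    calc x₀^2 * ((m:ℝ)*((k:ℝ)*x₀^(k-1)) + (m:ℝ)*((k:ℝ)+2)*(x₀⁻¹)^(k+3))
        = (m:ℝ)*(x₀^2*((k:ℝ)*x₀^(k-1))) + (m:ℝ)*((k:ℝ)+2)*(x₀^2*(x₀⁻¹)^(k+3)) := by ring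
      _ = (m:ℝ)*((k:ℝ)*x₀^(k+1)) + (m:ℝ)*((k:ℝ)+2)*(x₀⁻¹)^(k+1) := by rw [i1, i2]
  have e2 : x₀*Gd x₀ = (m:ℝ)*x₀^(k+1) - (m:ℝ)*(x₀⁻¹)^(k+1) := by
    rw [hGd]
    calc x₀ * ((m:ℝ)*x₀^k - (m:ℝ)*(x₀⁻¹)^(k+2))
        = (m:ℝ)*(x₀*x₀^k) - (m:ℝ)*(x₀*(x₀⁻¹)^(k+2)) := by ring
      _ = (m:ℝ)*x₀^(k+1) - (m:ℝ)*(x₀⁻¹)^(k+1) := by rw [i3, i4]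
  have hcoef : A*(x₀^2*gdd) + B*(x₀*Gd x₀) ≤ (L-1)*g x₀ := by
    rw [e1, e2, hg₀, hL, hmcast]
    clear_value A B m L g gdd Gd
    have hb1 : 0 ≤ (|B| - B) * (((k:ℝ)+1) * x₀^(k+1)) :=
      mul_nonneg (by linarith [le_abs_self B]) (by positivity)
    have hb2 : 0 ≤ (|B| + B) * (((k:ℝ)+1) * (x₀⁻¹)^(k+1)) :=
      mul_nonneg (by linarith [neg_abs_le B]) (by positivity)
    have hb3 : 0 ≤ A * (((k:ℝ)+1) * x₀^(k+1)) := by positivity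
    linarith [hb1, hb2, hb3]
  have h9 : ε*EL*(A*(x₀^2*gdd) + B*(x₀*Gd x₀)) ≤ ε*EL*((L-1)*g x₀) :=
    mul_le_mul_of_nonneg_left hcoef (by positivity)
  linarith [hcomb, h9, mul_pos (mul_pos hε hELpos) (hgpos x₀ hx₀pos)]

theorem risk_subjective_PDE_uniqueness (ν ζ σ T : ℝ) (hσ : 0 < σ) (hT : 0 < T)
    (h : ℝ → ℝ) (hcont : Continuous h) (W₁ W₂ : ℝ → ℝ → ℝ)
    (hW₁cont : ContinuousOn (fun p : ℝ × ℝ => W₁ p.1 p.2) (Ioi 0 ×ˢ Icc 0 T))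
    (hW₂cont : ContinuousOn (fun p : ℝ × ℝ => W₂ p.1 p.2) (Ioi 0 ×ˢ Icc 0 T))
    (hW₁pde : SolvesRiskSubjPDE ν ζ σ T W₁)
    (hW₂pde : SolvesRiskSubjPDE ν ζ σ T W₂)
    (hW₁term : ∀ x : ℝ, 0 < x → W₁ x T = h x)
    (hW₂term : ∀ x : ℝ, 0 < x → W₂ x T = h x)
    (C : ℝ) (hC : 0 < C) (k : ℕ)
    (hW₁growth : ∀ x t : ℝ, 0 < x → t ∈ Icc 0 T →
      |W₁ x t| ≤ C * (1 + x ^ k + x⁻¹ ^ k))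
    (hW₂growth : ∀ x t : ℝ, 0 < x → t ∈ Icc 0 T →
      |W₂ x t| ≤ C * (1 + x ^ k + x⁻¹ ^ k)) :
    ∀ x t : ℝ, 0 < x → t ∈ Icc 0 T → W₁ x t = W₂ x t := by
  have hgrowth12 : ∀ x t : ℝ, 0 < x → t ∈ Icc 0 T →
      |W₁ x t - W₂ x t| ≤ (2*C) * (1 + x ^ k + x⁻¹ ^ k) := by
    intro x t hx htmem
    have h1 := hW₁growth x t hx htmem
    have h2 := hW₂growth x t hx htmem
    have h3 : |W₁ x t - W₂ x t| ≤ |W₁ x t| + |W₂ x t| := abs_sub _ _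
    linarith
  have hgrowth21 : ∀ x t : ℝ, 0 < x → t ∈ Icc 0 T →
      |W₂ x t - W₁ x t| ≤ (2*C) * (1 + x ^ k + x⁻¹ ^ k) := by
    intro x t hx htmem
    rw [abs_sub_comm]
    exact hgrowth12 x t hx htmem
  have key₁ := risk_subj_key ν ζ σ T hσ hT (fun y s => W₁ y s - W₂ y s)
    (hW₁cont.sub hW₂cont) (hW₁pde.sub' hW₂pde)
    (fun y hy => by show _ - _ = (0:ℝ); rw [hW₁term y hy, hW₂term y hy, sub_self])
    (2*C) (by linarith) k hgrowth12
  have key₂ := risk_subj_key ν ζ σ T hσ hT (fun y s => W₂ y s - W₁ y s)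
    (hW₂cont.sub hW₁cont) (hW₂pde.sub' hW₁pde)
    (fun y hy => by show _ - _ = (0:ℝ); rw [hW₁term y hy, hW₂term y hy, sub_self])
    (2*C) (by linarith) k hgrowth21
  have heqpos : ∀ x s : ℝ, 0 < x → 0 < s → s ≤ T → W₁ x s = W₂ x s := by
    intro x s hx hs hsT
    have h1 : W₁ x s - W₂ x s ≤ 0 := key₁ x s hx hs hsT
    have h2 : W₂ x s - W₁ x s ≤ 0 := key₂ x s hx hs hsT
    linarith
  intro x t hx htmem
  rcases eq_or_lt_of_le htmem.1 with h0 | h0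
  · -- t = 0 : use continuity
    subst h0
    have hc₁ : ContinuousWithinAt (fun s => W₁ x s) (Icc 0 T) 0 := by
      have hmem : ((x, (0:ℝ)) : ℝ × ℝ) ∈ Ioi 0 ×ˢ Icc 0 T := ⟨hx, left_mem_Icc.2 hT.le⟩
      have hmap : MapsTo (fun s : ℝ => ((x, s) : ℝ × ℝ)) (Icc 0 T) (Ioi 0 ×ˢ Icc 0 T) :=
        fun s hs => ⟨hx, hs⟩
      exact (hW₁cont _ hmem).comp
        ((continuous_const.prodMk continuous_id).continuousWithinAt) hmap
    have hc₂ : ContinuousWithinAt (fun s => W₂ x s) (Icc 0 T) 0 := by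
      have hmem : ((x, (0:ℝ)) : ℝ × ℝ) ∈ Ioi 0 ×ˢ Icc 0 T := ⟨hx, left_mem_Icc.2 hT.le⟩
      have hmap : MapsTo (fun s : ℝ => ((x, s) : ℝ × ℝ)) (Icc 0 T) (Ioi 0 ×ˢ Icc 0 T) :=
        fun s hs => ⟨hx, hs⟩
      exact (hW₂cont _ hmem).comp
        ((continuous_const.prodMk continuous_id).continuousWithinAt) hmap
    have hNB : (nhdsWithin (0:ℝ) (Ioc 0 T)).NeBot := by
      apply mem_closure_iff_nhdsWithin_neBot.mp
      rw [closure_Ioc hT.ne]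
      exact left_mem_Icc.2 hT.le
    have h₁ : Filter.Tendsto (fun s => W₁ x s - W₂ x s) (nhdsWithin 0 (Ioc 0 T))
        (nhds (W₁ x 0 - W₂ x 0)) :=
      ((hc₁.sub hc₂)).mono_left (nhdsWithin_mono 0 Ioc_subset_Icc_self)
    have h₂ : Filter.Tendsto (fun s => W₁ x s - W₂ x s) (nhdsWithin 0 (Ioc 0 T))
        (nhds 0) := by
      apply Filter.Tendsto.congr' _ tendsto_const_nhds
      filter_upwards [self_mem_nhdsWithin] with s hs
      rw [heqpos x s hx hs.1 hs.2, sub_self]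
    have := tendsto_nhds_unique h₁ h₂
    linarith
  · exact heqpos x t hx h0 htmem.2
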